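/- Let $k \in \mathbb{N}$, let $m \in \mathbb{N}$ be even, and let $h_1, \ldots, h_m \in \mathbb{Z}$ with $\gcd(h_j, k) = 1$ and multiplicative inverses $h_j'$ mod $k$. Then $\sum_{a_1+\cdots+a_m \equiv 0 \pmod{k}} ((a_1 h_1/k)) \cdots ((a_m h_m/k)) = \frac{(-1)^{m/2}}{2^m k} \sum_{a=1}^{k-1} \cot(\pi a h_1'/k) \cdots \cot(\pi a h_m'/k)$. -/

import Mathlib

open scoped Classical

/-- The sawtooth function `((x))`. -/
noncomputable def saw (x : ℝ) : ℝ :=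
  if ∃ m : ℤ, x = m then 0 else Int.fract x - 1 / 2

/-- The cotangent function. -/
noncomputable def cot (x : ℝ) : ℝ := Real.cos x / Real.sin x

open Finset

lemma saw_add_int (x : ℝ) (n : ℤ) : saw (x + n) = saw x := by
  unfold saw
  rw [Int.fract_add_intCast]
  congr 1
  simp only [eq_iff_iff]
  constructor
  · rintro ⟨t, ht⟩; exact ⟨t - n, by push_cast; linarith⟩
  · rintro ⟨t, ht⟩; exact ⟨t + n, by push_cast; linarith⟩

lemma saw_intCast_div (k : ℕ) (hk : 0 < k) (b : ℕ) (hb : b < k) :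
    saw ((b : ℝ) / k) = if b = 0 then 0 else (b : ℝ) / k - 1 / 2 := by
  rcases Nat.eq_zero_or_pos b with rfl | hb0
  · simp [saw]
    exact ⟨0, by simp⟩
  · rw [if_neg hb0.ne']
    have h1 : (0:ℝ) < (b:ℝ)/k := by positivity
    have h2 : (b:ℝ)/k < 1 := by
      rw [div_lt_one (by positivity)]; exact_mod_cast hb
    unfold saw
    rw [if_neg, Int.fract_eq_self.2 ⟨h1.le, h2⟩]
    rintro ⟨t, ht⟩
    rw [ht] at h1 h2
    have : (0:ℤ) < t := by exact_mod_cast h1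
    have : t < 1 := by exact_mod_cast h2
    omega

section Zeta
variable (k : ℕ) (hk : 0 < k)

noncomputable def zet (k : ℕ) : ℂ := Complex.exp (2 * Real.pi * Complex.I / k)

lemma zet_prim (hk : 0 < k) : IsPrimitiveRoot (zet k) k :=
  Complex.isPrimitiveRoot_exp k hk.ne'

lemma zet_ne_zero : zet k ≠ 0 := Complex.exp_ne_zero _

lemma zet_zpow_eq_one_iff (hk : 0 < k) (n : ℤ) : zet k ^ n = 1 ↔ (k : ℤ) ∣ n :=
  (zet_prim k hk).zpow_eq_one_iff_dvd n

/-- orthogonality -/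
lemma zet_sum_zpow (hk : 0 < k) (n : ℤ) :
    ∑ c ∈ Finset.range k, zet k ^ ((c : ℤ) * n) = if (k : ℤ) ∣ n then (k : ℂ) else 0 := by
  have hz := zet_ne_zero k
  split_ifs with hd
  · have : ∀ c ∈ Finset.range k, zet k ^ ((c:ℤ) * n) = 1 := fun c _ => by
      rw [zet_zpow_eq_one_iff k hk]; exact Dvd.dvd.mul_left hd c
    rw [Finset.sum_congr rfl this]; simp
  · have h1 : zet k ^ n ≠ 1 := by rwa [Ne, zet_zpow_eq_one_iff k hk]
    have : ∀ c ∈ Finset.range k, zet k ^ ((c:ℤ) * n) = (zet k ^ n) ^ c := fun c _ => by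
      rw [← zpow_natCast (zet k ^ n) c, ← zpow_mul]; ring_nf
    rw [Finset.sum_congr rfl this, geom_sum_eq h1, ← zpow_natCast (zet k ^ n) k, ← zpow_mul,
      mul_comm, zpow_mul, zpow_natCast]
    rw [(zet_prim k hk).pow_eq_one, one_zpow]
    simp

lemma zet_sum_mul_zpow (hk : 0 < k) (n : ℤ) (hn : ¬ (k:ℤ) ∣ n) :
    ∑ b ∈ Finset.range k, (b : ℂ) * zet k ^ ((b : ℤ) * n) = k / (zet k ^ n - 1) := by
  have hz1 : zet k ^ n ≠ 1 := by rwa [Ne, zet_zpow_eq_one_iff k hk]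
  set x := zet k ^ n with hx
  have hxk : x ^ k = 1 := by
    rw [hx, ← zpow_natCast, ← zpow_mul, mul_comm, zpow_mul, zpow_natCast,
      (zet_prim k hk).pow_eq_one, one_zpow]
  have hrw : ∀ b ∈ Finset.range k, (b:ℂ) * zet k ^ ((b:ℤ) * n) = b * x ^ b := fun b _ => by
    rw [hx, ← zpow_natCast (zet k ^ n) b, ← zpow_mul]; ring_nf
  rw [Finset.sum_congr rfl hrw]
  have hx1 : x - 1 ≠ 0 := sub_ne_zero.2 hz1
  have key : (x - 1) * ∑ b ∈ Finset.range k, (b:ℂ) * x ^ b = k := by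
    rw [Finset.mul_sum]
    have expand : ∀ b ∈ Finset.range k, (x - 1) * ((b:ℂ) * x ^ b)
        = ((((b+1:ℕ)):ℂ) * x ^ (b+1) - (b:ℂ) * x ^ b) - x ^ (b+1) := fun b _ => by
      push_cast; ring
    rw [Finset.sum_congr rfl expand, Finset.sum_sub_distrib,
      Finset.sum_range_sub (fun b => (b:ℂ) * x ^ b)]
    have h2 : ∑ b ∈ Finset.range k, x ^ (b+1) = 0 := by
      have : ∀ b ∈ Finset.range k, x ^ (b+1) = x * x ^ b := fun b _ => by ring
      rw [Finset.sum_congr rfl this, ← Finset.mul_sum, geom_sum_eq hz1, hxk]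
      simp
    rw [h2, hxk]
    simp
  field_simp
  rw [← key]
  ring

lemma sin_ne_zero_of_not_dvd (hk : 0 < k) (n : ℤ) (hn : ¬ (k:ℤ) ∣ n) :
    Real.sin (Real.pi * n / k) ≠ 0 := by
  intro hs
  rw [Real.sin_eq_zero_iff] at hs
  obtain ⟨t, ht⟩ := hs
  apply hn
  refine ⟨t, ?_⟩
  have hkR : (k:ℝ) ≠ 0 := Nat.cast_ne_zero.2 hk.ne'
  rw [eq_div_iff hkR] at ht
  have h4 : Real.pi * ((t:ℝ) * k) = Real.pi * (n:ℝ) := by linear_combination ht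
  have h5 := mul_left_cancel₀ Real.pi_ne_zero h4
  have h3 : ((n:ℝ)) = ((k * t : ℤ) : ℝ) := by push_cast; linarith [h5]
  exact_mod_cast h3
lemma zet_ratio (hk : 0 < k) (n : ℤ) (hn : ¬ (k:ℤ) ∣ n) :
    (zet k ^ n + 1) / (zet k ^ n - 1) = -Complex.I * (cot (Real.pi * n / k) : ℝ) := by
  set α : ℝ := Real.pi * n / k with hα
  have hsin : Real.sin α ≠ 0 := sin_ne_zero_of_not_dvd k hk n hn
  set c : ℂ := ((Real.cos α : ℝ) : ℂ) with hc
  set s : ℂ := ((Real.sin α : ℝ) : ℂ) with hs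
  have hsne : s ≠ 0 := by rwa [hs, Ne, Complex.ofReal_eq_zero]
  have hcs : c ^ 2 + s ^ 2 = 1 := by
    rw [hc, hs]
    exact_mod_cast Real.cos_sq_add_sin_sq α
  have hzn : zet k ^ n = Complex.exp ((α:ℂ) * Complex.I) ^ 2 := by
    rw [← Complex.exp_nat_mul, zet, ← Complex.exp_int_mul]
    congr 1
    have hkC : (k:ℂ) ≠ 0 := Nat.cast_ne_zero.2 hk.ne'
    rw [hα]
    push_cast
    field_simp
  have hexp : Complex.exp ((α:ℂ) * Complex.I) = c + s * Complex.I := by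
    rw [Complex.exp_mul_I, hc, hs, Complex.ofReal_cos, Complex.ofReal_sin]
  have hexpne : c + s * Complex.I ≠ 0 := by rw [← hexp]; exact Complex.exp_ne_zero _
  rw [hzn, hexp]
  have e1 : (c + s * Complex.I) ^ 2 + 1 = 2 * c * (c + s * Complex.I) := by
    linear_combination (-1 : ℂ) * hcs + s^2 * Complex.I_sq
  have e2 : (c + s * Complex.I) ^ 2 - 1 = 2 * Complex.I * s * (c + s * Complex.I) := by
    linear_combination hcs - s^2 * Complex.I_sq
  rw [e1, e2]
  simp only [_root_.cot]
  rw [Complex.ofReal_div, ← hc, ← hs]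
  have hIne : Complex.I ≠ 0 := Complex.I_ne_zero
  field_simp
  ring_nf
  linear_combination c * Complex.I_sq

lemma sum_formula (hk : 0 < k) :
    ∑ b ∈ Finset.range k, ((b:ℝ) / k - 1/2) = -(1/2) := by
  have hkR : (k:ℝ) ≠ 0 := Nat.cast_ne_zero.2 hk.ne'
  rw [Finset.sum_sub_distrib, ← Finset.sum_div]
  have h1 : ∀ n : ℕ, ∑ b ∈ Finset.range n, (b:ℝ) = n * (n-1) / 2 := by
    intro n
    induction n with
    | zero => simp
    | succ n ih =>
      rw [Finset.sum_range_succ, ih]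
      push_cast
      ring
  rw [h1 k]
  simp only [Finset.sum_const, Finset.card_range, nsmul_eq_mul]
  field_simp
  ring

lemma saw_sum_zero (hk : 0 < k) : ∑ b ∈ Finset.range k, saw ((b:ℝ) / k) = 0 := by
  have h0 : (0:ℕ) ∈ Finset.range k := Finset.mem_range.2 hk
  rw [← Finset.add_sum_erase _ _ h0]
  have hsaw0 : saw ((0:ℕ) / k) = 0 := by
    simp [saw]
    exact ⟨0, by simp⟩
  rw [hsaw0, zero_add]
  have congr1 : ∀ b ∈ (Finset.range k).erase 0, saw ((b:ℝ)/k) = (b:ℝ)/k - 1/2 := by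
    intro b hb
    rw [Finset.mem_erase, Finset.mem_range] at hb
    rw [saw_intCast_div k hk b hb.2, if_neg hb.1]
  rw [Finset.sum_congr rfl congr1, Finset.sum_erase_eq_sub h0, sum_formula k hk]
  norm_num

lemma saw_fourier (hk : 0 < k) (n : ℤ) :
    ∑ b ∈ Finset.range k, (saw ((b:ℝ)/k) : ℂ) * zet k ^ ((b:ℤ) * n)
    = if (k:ℤ) ∣ n then 0 else -Complex.I/2 * (cot (Real.pi * n / k) : ℝ) := by
  split_ifs with hd
  · have h1 : ∀ b ∈ Finset.range k, (saw ((b:ℝ)/k) : ℂ) * zet k ^ ((b:ℤ)*n)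
        = ((saw ((b:ℝ)/k) : ℝ) : ℂ) := by
      intro b _
      rw [(zet_zpow_eq_one_iff k hk _).2 (Dvd.dvd.mul_left hd b), mul_one]
    rw [Finset.sum_congr rfl h1]
    exact_mod_cast saw_sum_zero k hk
  · have h0 : (0:ℕ) ∈ Finset.range k := Finset.mem_range.2 hk
    rw [← Finset.add_sum_erase _ _ h0]
    have t0 : (saw (((0:ℕ):ℝ)/k) : ℂ) * zet k ^ (((0:ℕ):ℤ)*n) = 0 := by
      have hs0 : saw (((0:ℕ):ℝ)/k) = 0 := by
        simp [saw]
        exact ⟨0, by simp⟩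
      rw [hs0]
      simp
    rw [t0, zero_add]
    have congr1 : ∀ b ∈ (Finset.range k).erase 0,
        (saw ((b:ℝ)/k) : ℂ) * zet k ^ ((b:ℤ)*n) = ((b:ℂ)/k - 1/2) * zet k ^ ((b:ℤ)*n) := by
      intro b hb
      rw [Finset.mem_erase, Finset.mem_range] at hb
      rw [saw_intCast_div k hk b hb.2, if_neg hb.1]
      push_cast
      ring
    rw [Finset.sum_congr rfl congr1, Finset.sum_erase_eq_sub h0]
    have split : ∑ b ∈ Finset.range k, ((b:ℂ)/k - 1/2) * zet k ^ ((b:ℤ)*n)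
        = (1/k) * (∑ b ∈ Finset.range k, (b:ℂ) * zet k ^ ((b:ℤ)*n))
          - (1/2) * ∑ b ∈ Finset.range k, zet k ^ ((b:ℤ)*n) := by
      rw [Finset.mul_sum, Finset.mul_sum, ← Finset.sum_sub_distrib]
      exact Finset.sum_congr rfl fun b _ => by ring
    rw [split, zet_sum_mul_zpow k hk n hd, zet_sum_zpow k hk n, if_neg hd]
    have hkC : (k:ℂ) ≠ 0 := Nat.cast_ne_zero.2 hk.ne'
    have hz1 : zet k ^ n - 1 ≠ 0 :=
      sub_ne_zero.2 (by rwa [Ne, zet_zpow_eq_one_iff k hk])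
    have hr := zet_ratio k hk n hd
    have e0 : (((0:ℕ):ℂ)/k - 1/2) * zet k ^ (((0:ℕ):ℤ)*n) = -(1/2) := by
      norm_num
    rw [e0]
    field_simp
    field_simp at hr
    linear_combination hr

lemma zet_zpow_congr (hk : 0 < k) {a b : ℤ} (hab : a ≡ b [ZMOD (k:ℤ)]) :
    zet k ^ a = zet k ^ b := by
  have h1 : zet k ^ (a - b) = 1 :=
    (zet_zpow_eq_one_iff k hk _).2 (Int.ModEq.dvd hab.symm)
  calc zet k ^ a = zet k ^ (a - b) * zet k ^ b := by
        rw [← zpow_add₀ (zet_ne_zero k)]; ring_nf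
    _ = zet k ^ b := by rw [h1, one_mul]

lemma emod_inv_cancel (hk : 0 < k) (u v : ℤ) (huv : (k:ℤ) ∣ u * v - 1)
    (b : ℕ) (hb : b < k) : ((((b:ℤ) * u) % k) * v) % k = b := by
  have m1 : (((b:ℤ) * u) % k) * v ≡ ((b:ℤ) * u) * v [ZMOD (k:ℤ)] :=
    Int.ModEq.mul_right v (Int.emod_emod_of_dvd _ dvd_rfl)
  have m2 : ((b:ℤ) * u) * v ≡ (b:ℤ) [ZMOD (k:ℤ)] := by
    refine Int.modEq_iff_dvd.2 ?_
    rw [show (b:ℤ) - (b:ℤ) * u * v = -((b:ℤ) * (u * v - 1)) by ring]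
    exact dvd_neg.2 (Dvd.dvd.mul_left huv b)
  have m3 := m1.trans m2
  rw [Int.ModEq] at m3
  rw [m3, Int.emod_eq_of_lt (by positivity) (by exact_mod_cast hb)]

lemma saw_inner_sum (hk : 0 < k) (u v : ℤ) (huv : (k:ℤ) ∣ u * v - 1) (c : ℕ) :
    ∑ x ∈ Finset.range k, (saw ((x:ℝ) * u / k) : ℂ) * zet k ^ ((c:ℤ) * x)
    = if (k:ℤ) ∣ ((c:ℤ) * v) then 0
      else -Complex.I/2 * (cot (Real.pi * ((c:ℤ) * v : ℤ) / k) : ℝ) := by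
  have hkZ : (k:ℤ) ≠ 0 := by exact_mod_cast hk.ne'
  have hkR : (k:ℝ) ≠ 0 := Nat.cast_ne_zero.2 hk.ne'
  have hvu : (k:ℤ) ∣ v * u - 1 := by rw [show v * u - 1 = u * v - 1 by ring]; exact huv
  set n : ℤ := (c:ℤ) * v with hn
  rw [← saw_fourier k hk n]
  refine Finset.sum_nbij' (fun x => (((x:ℤ) * u) % k).toNat)
    (fun b => (((b:ℤ) * v) % k).toNat) ?_ ?_ ?_ ?_ ?_
  · intro x hx
    rw [Finset.mem_range] at hx ⊢
    have h0 : (0:ℤ) ≤ ((x:ℤ) * u) % k := Int.emod_nonneg _ hkZ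
    have h1 : ((x:ℤ) * u) % k < k := Int.emod_lt_of_pos _ (by exact_mod_cast hk)
    omega
  · intro b hb
    rw [Finset.mem_range] at hb ⊢
    have h0 : (0:ℤ) ≤ ((b:ℤ) * v) % k := Int.emod_nonneg _ hkZ
    have h1 : ((b:ℤ) * v) % k < k := Int.emod_lt_of_pos _ (by exact_mod_cast hk)
    omega
  · intro x hx
    rw [Finset.mem_range] at hx
    have h0 : (0:ℤ) ≤ ((x:ℤ) * u) % k := Int.emod_nonneg _ hkZ
    have key := emod_inv_cancel k hk u v huv x hx
    have : (((((x:ℤ) * u) % k).toNat : ℤ) * v) % k = (x:ℤ) := by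
      rw [Int.toNat_of_nonneg h0]; exact key
    omega
  · intro b hb
    rw [Finset.mem_range] at hb
    have h0 : (0:ℤ) ≤ ((b:ℤ) * v) % k := Int.emod_nonneg _ hkZ
    have key := emod_inv_cancel k hk v u hvu b hb
    have : (((((b:ℤ) * v) % k).toNat : ℤ) * u) % k = (b:ℤ) := by
      rw [Int.toNat_of_nonneg h0]; exact key
    omega
  · intro x hx
    rw [Finset.mem_range] at hx
    set r : ℤ := ((x:ℤ) * u) % k with hr
    have h0 : (0:ℤ) ≤ r := Int.emod_nonneg _ hkZ
    have htn : ((r.toNat : ℕ) : ℤ) = r := Int.toNat_of_nonneg h0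
    have hdiv : (x:ℤ) * u = r + k * ((x:ℤ) * u / k) := by
      rw [hr]; rw [Int.emod_add_mul_ediv ((x:ℤ)*u) (k:ℤ)]
    congr 1
    · -- saw part
      have hc : (x:ℝ) * u / k = ((r.toNat : ℕ) : ℝ) / k + (((x:ℤ) * u / k : ℤ) : ℝ) := by
        have : ((x:ℤ) * u : ℝ) = (r : ℝ) + (k:ℝ) * (((x:ℤ) * u / k : ℤ) : ℝ) := by
          exact_mod_cast congrArg (Int.cast : ℤ → ℝ) hdiv
        have htnR : ((r.toNat : ℕ) : ℝ) = ((r : ℤ) : ℝ) := by exact_mod_cast htn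
        rw [htnR]
        push_cast at this ⊢
        field_simp
        linear_combination this
      rw [hc, saw_add_int]
    · -- zet part
      apply zet_zpow_congr k hk
      have m1 : ((r.toNat : ℕ) : ℤ) * n ≡ ((x:ℤ) * u) * n [ZMOD (k:ℤ)] := by
        rw [htn, hr]
        exact Int.ModEq.mul_right n (Int.emod_emod_of_dvd _ dvd_rfl)
      have m2 : ((x:ℤ) * u) * n ≡ (c:ℤ) * x [ZMOD (k:ℤ)] := by
        refine Int.modEq_iff_dvd.2 ?_
        rw [show (c:ℤ) * x - (x:ℤ) * u * n = -(((c:ℤ) * x) * (u * v - 1)) by rw [hn]; ring]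
        exact dvd_neg.2 (Dvd.dvd.mul_left huv _)
      exact (m1.trans m2).symm

theorem zagier_higher_dedekind (k m : ℕ) (hk : 0 < k) (hm : 0 < m) (hme : Even m)
    (h h' : Fin m → ℤ) (hco : ∀ j, Int.gcd (h j) k = 1)
    (hinv : ∀ j, h j * h' j ≡ 1 [ZMOD (k : ℤ)]) :
    ∑ a ∈ Finset.univ.filter (fun a : Fin m → Fin k => (∑ j, (a j : ℕ)) % k = 0),
        ∏ j, saw ((a j : ℕ) * (h j : ℝ) / k)
      = (-1 : ℝ) ^ (m / 2) / (2 ^ m * k) *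
          ∑ a ∈ Finset.Icc 1 (k - 1), ∏ j, cot (Real.pi * a * (h' j : ℝ) / k) := by
  have hkC : (k:ℂ) ≠ 0 := Nat.cast_ne_zero.2 hk.ne'
  have hdvd : ∀ j, (k:ℤ) ∣ h j * h' j - 1 := by
    intro j
    have := Int.ModEq.dvd (hinv j)
    rwa [show (1 : ℤ) - h j * h' j = -(h j * h' j - 1) by ring, dvd_neg] at this
  have main : ∑ a ∈ Finset.univ.filter (fun a : Fin m → Fin k => (∑ j, (a j : ℕ)) % k = 0),
        ∏ j, ((saw ((a j : ℕ) * (h j : ℝ) / k) : ℝ) : ℂ)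
      = ((-1 : ℝ) : ℂ) ^ (m / 2) / (2 ^ m * (k:ℂ)) *
          ∑ a ∈ Finset.Icc 1 (k - 1), ∏ j, ((cot (Real.pi * a * (h' j : ℝ) / k) : ℝ) : ℂ) := by
    calc ∑ a ∈ Finset.univ.filter (fun a : Fin m → Fin k => (∑ j, (a j : ℕ)) % k = 0),
          ∏ j, ((saw ((a j : ℕ) * (h j : ℝ) / k) : ℝ) : ℂ)
        = ∑ a : Fin m → Fin k, (if (∑ j, (a j : ℕ)) % k = 0
            then ∏ j, ((saw ((a j : ℕ) * (h j : ℝ) / k) : ℝ) : ℂ) else 0) :=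
          Finset.sum_filter _ _
      _ = ∑ a : Fin m → Fin k, (1/(k:ℂ)) *
            ((∑ c ∈ Finset.range k, zet k ^ ((c:ℤ) * ((∑ j, (a j : ℕ) : ℕ) : ℤ))) *
              ∏ j, ((saw ((a j : ℕ) * (h j : ℝ) / k) : ℝ) : ℂ)) := by
          refine Finset.sum_congr rfl fun a _ => ?_
          rw [zet_sum_zpow k hk]
          have hiff : (∑ j, (a j : ℕ)) % k = 0 ↔ (k:ℤ) ∣ ((∑ j, (a j : ℕ) : ℕ) : ℤ) := by
            rw [Int.natCast_dvd_natCast, Nat.dvd_iff_mod_eq_zero]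
          by_cases hd : (∑ j, (a j : ℕ)) % k = 0
          · rw [if_pos hd, if_pos (hiff.1 hd)]
            field_simp
          · rw [if_neg hd, if_neg (fun hh => hd (hiff.2 hh))]
            ring
      _ = (1/(k:ℂ)) * ∑ c ∈ Finset.range k, ∑ a : Fin m → Fin k,
            ∏ j, (((saw ((a j : ℕ) * (h j : ℝ) / k) : ℝ) : ℂ) *
              zet k ^ ((c:ℤ) * ((a j : ℕ) : ℤ))) := by
          rw [← Finset.mul_sum]
          congr 1
          have step1 : ∀ a : Fin m → Fin k,
              (∑ c ∈ Finset.range k, zet k ^ ((c:ℤ) * ((∑ j, (a j : ℕ) : ℕ) : ℤ))) *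
                ∏ j, ((saw ((a j : ℕ) * (h j : ℝ) / k) : ℝ) : ℂ)
              = ∑ c ∈ Finset.range k,
                  ∏ j, (((saw ((a j : ℕ) * (h j : ℝ) / k) : ℝ) : ℂ) *
                    zet k ^ ((c:ℤ) * ((a j : ℕ) : ℤ))) := by
            intro a
            rw [Finset.sum_mul]
            refine Finset.sum_congr rfl fun c _ => ?_
            have hz : zet k ^ ((c:ℤ) * ((∑ j, (a j : ℕ) : ℕ) : ℤ))
                = ∏ j, zet k ^ ((c:ℤ) * ((a j : ℕ) : ℤ)) := by
              rw [show (c:ℤ) * ((∑ j, (a j : ℕ) : ℕ) : ℤ)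
                  = ((∑ j, c * (a j : ℕ) : ℕ) : ℤ) by push_cast [Finset.mul_sum]; ring]
              rw [zpow_natCast, ← Finset.prod_pow_eq_pow_sum]
              refine Finset.prod_congr rfl fun j _ => ?_
              have hcast : ((c * (a j : ℕ) : ℕ) : ℤ) = (c:ℤ) * ((a j : ℕ) : ℤ) := by
                push_cast; ring
              rw [← zpow_natCast, hcast]
            rw [hz, ← Finset.prod_mul_distrib]
            exact Finset.prod_congr rfl fun j _ => mul_comm _ _
          rw [Finset.sum_congr rfl fun a _ => step1 a]
          exact Finset.sum_comm
      _ = (1/(k:ℂ)) * ∑ c ∈ Finset.range k, ∏ j, (∑ x ∈ Finset.range k,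
            ((saw ((x:ℝ) * (h j : ℝ) / k) : ℝ) : ℂ) * zet k ^ ((c:ℤ) * (x:ℤ))) := by
          congr 1
          refine Finset.sum_congr rfl fun c _ => ?_
          rw [← Fintype.piFinset_univ, Finset.sum_prod_piFinset Finset.univ
            (fun j (x : Fin k) => ((saw ((x:ℕ) * (h j : ℝ) / k) : ℝ) : ℂ) *
              zet k ^ ((c:ℤ) * ((x:ℕ) : ℤ)))]
          refine Finset.prod_congr rfl fun j _ => ?_
          exact Fin.sum_univ_eq_sum_range
            (fun x : ℕ => ((saw ((x:ℝ) * (h j : ℝ) / k) : ℝ) : ℂ) * zet k ^ ((c:ℤ) * (x:ℤ))) k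
      _ = (1/(k:ℂ)) * ∑ c ∈ Finset.range k, ∏ j,
            (if (k:ℤ) ∣ ((c:ℤ) * h' j) then 0
             else -Complex.I/2 * ((cot (Real.pi * (((c:ℤ) * h' j : ℤ) : ℝ) / k) : ℝ) : ℂ)) := by
          congr 1
          refine Finset.sum_congr rfl fun c _ => ?_
          refine Finset.prod_congr rfl fun j _ => ?_
          exact saw_inner_sum k hk (h j) (h' j) (hdvd j) c
      _ = (1/(k:ℂ)) * ∑ c ∈ Finset.Icc 1 (k-1), ∏ j,
            (-Complex.I/2 * ((cot (Real.pi * (c:ℝ) * (h' j : ℝ) / k) : ℝ) : ℂ)) := by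
          congr 1
          have hins : Finset.range k = insert 0 (Finset.Icc 1 (k-1)) := by
            ext x
            simp only [Finset.mem_range, Finset.mem_insert, Finset.mem_Icc]
            omega
          rw [hins, Finset.sum_insert (by simp)]
          have hzero : ∏ j : Fin m, (if (k:ℤ) ∣ (((0:ℕ):ℤ) * h' j) then 0
              else -Complex.I/2 * ((cot (Real.pi * ((((0:ℕ):ℤ) * h' j : ℤ) : ℝ) / k) : ℝ) : ℂ)) = 0 := by
            apply Finset.prod_eq_zero (Finset.mem_univ (⟨0, hm⟩ : Fin m))
            rw [if_pos (by simp)]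
          rw [hzero, zero_add]
          refine Finset.sum_congr rfl fun c hc => ?_
          rw [Finset.mem_Icc] at hc
          have hck : 0 < c ∧ c < k := by omega
          refine Finset.prod_congr rfl fun j _ => ?_
          have hcop : IsCoprime ((k:ℤ)) (h' j) := by
            obtain ⟨t, ht⟩ := hdvd j
            exact ⟨-t, h j, by linarith [ht]⟩
          have hnd : ¬ (k:ℤ) ∣ ((c:ℤ) * h' j) := by
            intro hdd
            have : (k:ℤ) ∣ (c:ℤ) := hcop.dvd_of_dvd_mul_right hdd
            have hkc : (k:ℕ) ∣ c := by exact_mod_cast this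
            exact absurd (Nat.le_of_dvd (by omega) hkc) (by omega)
          rw [if_neg hnd]
          congr 2
          push_cast
          ring
      _ = ((-1 : ℝ) : ℂ) ^ (m / 2) / (2 ^ m * (k:ℂ)) *
            ∑ a ∈ Finset.Icc 1 (k - 1), ∏ j, ((cot (Real.pi * a * (h' j : ℝ) / k) : ℝ) : ℂ) := by
          have hprod : ∀ c : ℕ, ∏ j : Fin m,
              (-Complex.I/2 * ((cot (Real.pi * (c:ℝ) * (h' j : ℝ) / k) : ℝ) : ℂ))
              = (-Complex.I/2) ^ m * ∏ j : Fin m, ((cot (Real.pi * (c:ℝ) * (h' j : ℝ) / k) : ℝ) : ℂ) := by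
            intro c
            rw [Finset.prod_mul_distrib, Finset.prod_const, Finset.card_univ, Fintype.card_fin]
          simp only [hprod]
          rw [← Finset.mul_sum]
          obtain ⟨t, ht⟩ := hme
          have hm2 : m / 2 = t := by omega
          have hpow : (-Complex.I/2) ^ m = ((-1 : ℝ) : ℂ) ^ (m / 2) / 2 ^ m := by
            rw [div_pow, hm2, ht, show ((-1:ℝ):ℂ) = -1 by norm_num,
              show t + t = 2 * t by ring, pow_mul,
              show (-Complex.I)^2 = (-1:ℂ) by rw [neg_sq, Complex.I_sq]]
          rw [hpow]
          ring
  exact_mod_cast main
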